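/- arXiv:2301.02276 — 4 statements merged into one kernel-verified Lean document; each statement's English description precedes it below -/
import Mathlib

section
/- Let H be a symmetric positive definite n×n real matrix and let A be a k×n matrix whose rows are distinct standard basis vectors e_i^T for i in an index set I of size k. Let P = I_n − A^T(AA^T)^† A, which equals the diagonal matrix with (i,i) entry 1 if i ∉ I and 0 if i ∈ I. Then H^{-1} − H^{-1}A^T(AH^{-1}A^T)^{-1}AH^{-1} = (PHP)^†, where † denotes the Moore–Penrose pseudoinverse. -/
open Matrix

/-- `M` satisfies the four Penrose equations for `B`, i.e. `M = B†`,
the Moore–Penrose pseudoinverse of `B`. -/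
def IsMoorePenroseInv {m : Type*} [Fintype m] [DecidableEq m]
    (B M : Matrix m m ℝ) : Prop :=
  B * M * B = B ∧ M * B * M = M ∧ (B * M)ᵀ = B * M ∧ (M * B)ᵀ = M * B

lemma aux_mp {n k : ℕ} (H : Matrix (Fin n) (Fin n) ℝ) (hH : H.PosDef)
    (A : Matrix (Fin k) (Fin n) ℝ) (hAAT : A * Aᵀ = 1)
    (hdet : IsUnit (A * H⁻¹ * Aᵀ).det) :
    IsMoorePenroseInv
      ((1 - Aᵀ * (A * Aᵀ)⁻¹ * A) * H * (1 - Aᵀ * (A * Aᵀ)⁻¹ * A))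
      (H⁻¹ - H⁻¹ * Aᵀ * (A * H⁻¹ * Aᵀ)⁻¹ * A * H⁻¹) := by
  have hone : (1 : Matrix (Fin k) (Fin k) ℝ)⁻¹ = 1 :=
    Matrix.inv_eq_left_inv (by rw [Matrix.mul_one])
  have hP1 : Aᵀ * (A * Aᵀ)⁻¹ * A = Aᵀ * A := by rw [hAAT, hone, Matrix.mul_one]
  rw [hP1]
  set S : Matrix (Fin k) (Fin k) ℝ := A * H⁻¹ * Aᵀ with hS
  set M : Matrix (Fin n) (Fin n) ℝ := H⁻¹ - H⁻¹ * Aᵀ * S⁻¹ * A * H⁻¹ with hM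
  set P : Matrix (Fin n) (Fin n) ℝ := 1 - Aᵀ * A with hP
  have hHdet : IsUnit H.det := hH.det_pos.ne'.isUnit
  have hHinv : H * H⁻¹ = 1 := Matrix.mul_nonsing_inv H hHdet
  have hinvH : H⁻¹ * H = 1 := Matrix.nonsing_inv_mul H hHdet
  have hS1 : A * H⁻¹ * Aᵀ * S⁻¹ = 1 := Matrix.mul_nonsing_inv _ hdet
  have hS2 : S⁻¹ * (A * H⁻¹ * Aᵀ) = 1 := Matrix.nonsing_inv_mul _ hdet
  have hAM : A * M = 0 := by
    rw [hM, Matrix.mul_sub]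
    simp only [← Matrix.mul_assoc]
    rw [hS1, Matrix.one_mul, sub_self]
  have hMA : M * Aᵀ = 0 := by
    rw [hM, Matrix.sub_mul]
    simp only [Matrix.mul_assoc]
    rw [show H⁻¹ * (Aᵀ * (S⁻¹ * (A * (H⁻¹ * Aᵀ)))) =
        H⁻¹ * Aᵀ * (S⁻¹ * (A * H⁻¹ * Aᵀ)) by simp only [Matrix.mul_assoc],
      hS2, Matrix.mul_one, sub_self]
  have hAP : A * P = 0 := by
    rw [hP, Matrix.mul_sub, Matrix.mul_one, ← Matrix.mul_assoc, hAAT, Matrix.one_mul, sub_self]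
  have hPA : P * Aᵀ = 0 := by
    rw [hP, Matrix.sub_mul, Matrix.one_mul, Matrix.mul_assoc, hAAT, Matrix.mul_one, sub_self]
  have hPM : P * M = M := by
    rw [hP, Matrix.sub_mul, Matrix.one_mul, Matrix.mul_assoc, hAM, Matrix.mul_zero, sub_zero]
  have hMP : M * P = M := by
    rw [hP, Matrix.mul_sub, Matrix.mul_one, ← Matrix.mul_assoc, hMA, Matrix.zero_mul, sub_zero]
  have hPP : P * P = P := by
    rw [hP, Matrix.sub_mul, Matrix.one_mul, Matrix.mul_sub, Matrix.mul_one]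
    rw [show Aᵀ * A * (Aᵀ * A) = Aᵀ * (A * Aᵀ) * A by simp only [Matrix.mul_assoc], hAAT,
      Matrix.mul_one, sub_self, sub_zero]
  have hPT : Pᵀ = P := by
    rw [hP, Matrix.transpose_sub, Matrix.transpose_one, Matrix.transpose_mul,
      Matrix.transpose_transpose]
  have hMH : M * H = 1 - H⁻¹ * Aᵀ * S⁻¹ * A := by
    rw [hM, Matrix.sub_mul, hinvH, Matrix.mul_assoc, Matrix.mul_assoc, Matrix.mul_assoc,
      Matrix.mul_assoc, hinvH, Matrix.mul_one]
    simp only [Matrix.mul_assoc]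
  have hHM : H * M = 1 - Aᵀ * S⁻¹ * A * H⁻¹ := by
    rw [hM, Matrix.mul_sub, hHinv]
    rw [show H * (H⁻¹ * Aᵀ * S⁻¹ * A * H⁻¹) = H * H⁻¹ * (Aᵀ * S⁻¹ * A * H⁻¹) by
      simp only [Matrix.mul_assoc], hHinv, Matrix.one_mul]
  have hMB : M * (P * H * P) = P := by
    rw [← Matrix.mul_assoc, ← Matrix.mul_assoc, hMP, hMH, Matrix.sub_mul, Matrix.one_mul,
      Matrix.mul_assoc, hAP, Matrix.mul_zero, sub_zero]
  have hBM : P * H * P * M = P := by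
    rw [Matrix.mul_assoc (P * H) P M, hPM, Matrix.mul_assoc, hHM, Matrix.mul_sub,
      Matrix.mul_one]
    rw [show P * (Aᵀ * S⁻¹ * A * H⁻¹) = P * Aᵀ * (S⁻¹ * A * H⁻¹) by
      simp only [Matrix.mul_assoc], hPA, Matrix.zero_mul, sub_zero]
  refine ⟨?_, ?_, ?_, ?_⟩
  · rw [hBM]
    simp only [← Matrix.mul_assoc]
    rw [hPP]
  · rw [hMB]
    exact hPM
  · rw [hBM, hPT]
  · rw [hMB, hPT]

/-- For `H` symmetric positive definite and `A` a matrix whose rows are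
distinct standard basis vectors, with `P = I − Aᵀ(AAᵀ)⁻¹A`,
`H⁻¹ − H⁻¹Aᵀ(AH⁻¹Aᵀ)⁻¹AH⁻¹ = (PHP)†`. -/
theorem stmt1 {n k : ℕ} (H : Matrix (Fin n) (Fin n) ℝ) (hH : H.PosDef)
    (A : Matrix (Fin k) (Fin n) ℝ) (e : Fin k → Fin n) (he : Function.Injective e)
    (hA : A = Matrix.of fun i j => if j = e i then (1 : ℝ) else 0) :
    IsMoorePenroseInv
      ((1 - Aᵀ * (A * Aᵀ)⁻¹ * A) * H * (1 - Aᵀ * (A * Aᵀ)⁻¹ * A))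
      (H⁻¹ - H⁻¹ * Aᵀ * (A * H⁻¹ * Aᵀ)⁻¹ * A * H⁻¹) := by
  have hAAT : A * Aᵀ = 1 := by
    subst hA
    ext i j
    simp [Matrix.mul_apply, Matrix.one_apply, he.eq_iff, ite_and, eq_comm]
  have hHinvPD : (H⁻¹).PosDef := hH.inv
  have hATx : ∀ x : Fin k → ℝ, x ≠ 0 → Aᵀ *ᵥ x ≠ 0 := by
    intro x hx h0
    apply hx
    funext i
    have := congrFun h0 (e i)
    simpa [hA, Matrix.mulVec, dotProduct, eq_comm, he.eq_iff] using this
  have hSpd : (A * H⁻¹ * Aᵀ).PosDef := by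
    refine Matrix.PosDef.of_dotProduct_mulVec_pos ?_ ?_
    · have h1 : (H⁻¹).IsHermitian := hHinvPD.1
      have h1t : (H⁻¹)ᵀ = H⁻¹ := by
        simpa [Matrix.conjTranspose_eq_transpose_of_trivial] using h1.eq
      show (A * H⁻¹ * Aᵀ)ᴴ = _
      simp only [Matrix.conjTranspose_eq_transpose_of_trivial, Matrix.transpose_mul,
        Matrix.transpose_transpose, h1t, ← Matrix.mul_assoc]
    · intro x hx
      have key : star x ⬝ᵥ (A * H⁻¹ * Aᵀ) *ᵥ x
          = star (Aᵀ *ᵥ x) ⬝ᵥ H⁻¹ *ᵥ (Aᵀ *ᵥ x) := by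
        rw [← Matrix.mulVec_mulVec, ← Matrix.mulVec_mulVec, Matrix.dotProduct_mulVec,
          ← Matrix.mulVec_transpose]
        simp [star_trivial]
      rw [key]
      exact hHinvPD.dotProduct_mulVec_pos (hATx x hx)
  exact aux_mp H hH A hAAT hSpd.det_pos.ne'.isUnit
end

section
/- Let C be a class of subsets of a set Θ and D another class of subsets of Θ, both VC classes (i.e., each fails to shatter some finite set of cardinality bounded by its VC index). Then the class C ⊓ D = {C ∩ D : C ∈ C, D ∈ D} is also a VC class. -/
open Finset

/-- A class `C` of subsets of `Θ` shatters a finite set `A` if every subset of `A`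
is the intersection of `A` with some member of `C`. -/
def ShattersClass {Θ : Type*} (C : Set (Set Θ)) (A : Finset Θ) : Prop :=
  ∀ B ⊆ A, ∃ c ∈ C, (A : Set Θ) ∩ c = (B : Set Θ)

/-- `C` is a VC class if there is `k < ∞` such that `C` shatters no set of cardinality `k`. -/
def IsVCClass {Θ : Type*} (C : Set (Set Θ)) : Prop :=
  ∃ k : ℕ, ∀ A : Finset Θ, A.card = k → ¬ ShattersClass C A

open Classical in
noncomputable def traces {Θ : Type*} (C : Set (Set Θ)) (A : Finset Θ) : Finset (Finset Θ) :=
  A.powerset.filter (fun B => ∃ c ∈ C, (A : Set Θ) ∩ c = (B : Set Θ))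

lemma mem_traces {Θ : Type*} {C : Set (Set Θ)} {A B : Finset Θ} :
    B ∈ traces C A ↔ B ⊆ A ∧ ∃ c ∈ C, (A : Set Θ) ∩ c = (B : Set Θ) := by
  classical
  simp [traces, Finset.mem_filter, Finset.mem_powerset]

lemma shattersClass_mono {Θ : Type*} {C : Set (Set Θ)} {A B : Finset Θ} (hBA : B ⊆ A)
    (h : ShattersClass C A) : ShattersClass C B := by
  intro B' hB'
  obtain ⟨c, hc, hAc⟩ := h B' (hB'.trans hBA)
  refine ⟨c, hc, ?_⟩
  have : (B : Set Θ) ∩ c = (B : Set Θ) ∩ ((A : Set Θ) ∩ c) := by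
    ext x
    simp only [Set.mem_inter_iff, Finset.mem_coe]
    exact ⟨fun ⟨hx, hxc⟩ => ⟨hx, hBA hx, hxc⟩, fun ⟨hx, _, hxc⟩ => ⟨hx, hxc⟩⟩
  rw [this, hAc, Set.inter_eq_right]
  exact_mod_cast hB'

lemma card_traces_le {Θ : Type*} {C : Set (Set Θ)} {A : Finset Θ} {k : ℕ}
    (h : ∀ B : Finset Θ, B.card = k → ¬ ShattersClass C B) :
    (traces C A).card ≤ ∑ j ∈ range k, (A.card).choose j := by
  classical
  refine (Finset.card_le_card_shatterer _).trans ?_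
  have hsub : (traces C A).shatterer ⊆ (range k).biUnion (fun j => A.powersetCard j) := by
    intro B hB
    rw [Finset.mem_shatterer] at hB
    -- B ⊆ A
    obtain ⟨u, hu, hBu⟩ := hB (Finset.Subset.refl B)
    have hBA : B ⊆ A := by
      have : B ⊆ u := by rw [← hBu]; exact Finset.inter_subset_right
      exact this.trans (mem_traces.mp hu).1
    -- C shatters B in the ShattersClass sense
    have hSh : ShattersClass C B := by
      intro B' hB'
      obtain ⟨v, hv, hBv⟩ := hB hB'
      obtain ⟨hvA, c, hc, hAc⟩ := mem_traces.mp hv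
      refine ⟨c, hc, ?_⟩
      have h1 : (B : Set Θ) ∩ c = (B : Set Θ) ∩ ((A : Set Θ) ∩ c) := by
        ext x
        simp only [Set.mem_inter_iff, Finset.mem_coe]
        exact ⟨fun ⟨hx, hxc⟩ => ⟨hx, hBA hx, hxc⟩, fun ⟨hx, _, hxc⟩ => ⟨hx, hxc⟩⟩
      rw [h1, hAc, ← Finset.coe_inter, hBv]
    -- hence #B < k
    have hcard : B.card < k := by
      by_contra hge
      push_neg at hge
      obtain ⟨B', hB'B, hB'card⟩ := Finset.exists_subset_card_eq hge
      exact h B' hB'card (shattersClass_mono hB'B hSh)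
    exact Finset.mem_biUnion.mpr ⟨B.card, Finset.mem_range.mpr hcard,
      Finset.mem_powersetCard.mpr ⟨hBA, rfl⟩⟩
  refine (Finset.card_le_card hsub).trans ?_
  refine Finset.card_biUnion_le.trans ?_
  simp [Finset.card_powersetCard]

lemma exists_good_n (K : ℕ) : ∃ n : ℕ, 1 ≤ n ∧ (n + 1) ^ K < 2 ^ n := by
  have h := tendsto_pow_const_div_const_pow_of_one_lt K (by norm_num : (1 : ℝ) < 2)
  have h2 : ∀ᶠ n : ℕ in Filter.atTop, ((n : ℝ)) ^ K / 2 ^ n < 1 / 2 :=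
    h.eventually (gt_mem_nhds (by norm_num))
  obtain ⟨N, hN⟩ := Filter.eventually_atTop.mp h2
  refine ⟨max 1 N, le_max_left _ _, ?_⟩
  set n := max 1 N with hn
  have hb := hN (n + 1) (le_trans (le_max_right 1 N) (Nat.le_succ n))
  have hpos : (0 : ℝ) < 2 ^ (n + 1) := by positivity
  rw [div_lt_iff₀ hpos] at hb
  have heq : (1 : ℝ) / 2 * 2 ^ (n + 1) = 2 ^ n := by rw [pow_succ]; ring
  have : ((n : ℝ) + 1) ^ K < 2 ^ n := by
    push_cast at hb
    linarith
  have hfin : ((n + 1 : ℕ) : ℝ) ^ K < ((2 ^ n : ℕ) : ℝ) := by push_cast; linarith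
  exact_mod_cast hfin

/-- Pairwise intersections of two VC classes form a VC class. -/
theorem stmt4 {Θ : Type*} (C D : Set (Set Θ)) (hC : IsVCClass C) (hD : IsVCClass D) :
    IsVCClass {s | ∃ c ∈ C, ∃ d ∈ D, s = c ∩ d} := by
  classical
  obtain ⟨k₁, hk₁⟩ := hC
  obtain ⟨k₂, hk₂⟩ := hD
  obtain ⟨n, hn1, hnK⟩ := exists_good_n (k₁ + k₂)
  refine ⟨n, fun A hA hSh => ?_⟩
  -- every subset of A is an intersection of a C-trace and a D-trace
  have hpow : A.powerset ⊆ Finset.image₂ (· ∩ ·) (traces C A) (traces D A) := by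
    intro B hB
    rw [Finset.mem_powerset] at hB
    obtain ⟨s, hs, hAs⟩ := hSh B hB
    obtain ⟨c, hc, d, hd, rfl⟩ := hs
    refine Finset.mem_image₂.mpr ⟨A.filter (· ∈ c), ?_, A.filter (· ∈ d), ?_, ?_⟩
    · exact mem_traces.mpr ⟨Finset.filter_subset _ _, c, hc, by ext x; simp⟩
    · exact mem_traces.mpr ⟨Finset.filter_subset _ _, d, hd, by ext x; simp⟩
    · apply Finset.coe_injective
      rw [Finset.coe_inter, Finset.coe_filter, Finset.coe_filter, ← hAs]
      ext x; simp; tauto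
  have h1 : 2 ^ n ≤ (traces C A).card * (traces D A).card := by
    calc 2 ^ n = A.powerset.card := by rw [Finset.card_powerset, hA]
    _ ≤ (Finset.image₂ (· ∩ ·) (traces C A) (traces D A)).card := Finset.card_le_card hpow
    _ ≤ _ := Finset.card_image₂_le _ _ _
  have hb1 : (traces C A).card ≤ (n + 1) ^ k₁ := by
    refine (card_traces_le hk₁).trans ?_
    refine le_of_lt ?_
    calc ∑ j ∈ range k₁, (A.card).choose j ≤ ∑ j ∈ range k₁, (n + 1) ^ j := by
          refine Finset.sum_le_sum fun j _ => ?_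
          rw [hA]
          exact (Nat.choose_le_pow n j).trans (Nat.pow_le_pow_left (Nat.le_succ n) j)
    _ < (n + 1) ^ k₁ := Nat.geomSum_lt (by omega) (fun j hj => Finset.mem_range.mp hj)
  have hb2 : (traces D A).card ≤ (n + 1) ^ k₂ := by
    refine (card_traces_le hk₂).trans ?_
    refine le_of_lt ?_
    calc ∑ j ∈ range k₂, (A.card).choose j ≤ ∑ j ∈ range k₂, (n + 1) ^ j := by
          refine Finset.sum_le_sum fun j _ => ?_
          rw [hA]
          exact (Nat.choose_le_pow n j).trans (Nat.pow_le_pow_left (Nat.le_succ n) j)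
    _ < (n + 1) ^ k₂ := Nat.geomSum_lt (by omega) (fun j hj => Finset.mem_range.mp hj)
  have : 2 ^ n ≤ (n + 1) ^ (k₁ + k₂) := by
    calc 2 ^ n ≤ (traces C A).card * (traces D A).card := h1
    _ ≤ (n + 1) ^ k₁ * (n + 1) ^ k₂ := Nat.mul_le_mul hb1 hb2
    _ = (n + 1) ^ (k₁ + k₂) := (pow_add _ _ _).symm
  omega
end

section
/- Let (β*, p*, x*) be a limit FPPE for (b, v, s), let H(β) = E_s[max_i β_i v_i(θ)] − Σ_i b_i log β_i, and suppose H is twice continuously differentiable at β* with Hessian H (the smoothness assumption). If β*_i < 1 for all i, then for almost every θ, the price satisfies p*(θ) = (μ̄*)^T H^{-1} μ*(θ), where μ*(θ) = x*(θ) ⊙ v(θ) (elementwise product) and μ̄* = E_s[μ*(θ)]. -/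
open MeasureTheory Matrix

/-- Directional second derivative of a positively 1-homogeneous function along the ray
direction vanishes. -/
lemma aux_rayconst {E : Type*} [NormedAddCommGroup E] [NormedSpace ℝ E]
    {F : E → ℝ} {β : E} {u : Set E} (hu : IsOpen u) (hβ : β ∈ u)
    (hd : ∀ c ∈ u, DifferentiableAt ℝ F c)
    (hd2 : DifferentiableAt ℝ (fderiv ℝ F) β)
    (hom : ∀ t : ℝ, 0 < t → ∀ c, F (t • c) = t * F c)
    (y : E) : fderiv ℝ (fun c => fderiv ℝ F c y) β β = 0 := by
  have hgy : DifferentiableAt ℝ (fun c => fderiv ℝ F c y) β :=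
    hd2.clm_apply (differentiableAt_const y)
  have hline : HasDerivAt (fun t : ℝ => t • β) β 1 := by
    simpa using (hasDerivAt_id (1 : ℝ)).smul_const β
  have hcomp : HasDerivAt (fun t : ℝ => fderiv ℝ F (t • β) y)
      (fderiv ℝ (fun c => fderiv ℝ F c y) β β) 1 := by
    have hl : HasFDerivAt (fun c => fderiv ℝ F c y)
        (fderiv ℝ (fun c => fderiv ℝ F c y) β) ((fun t : ℝ => t • β) 1) := by
      simpa using hgy.hasFDerivAt
    exact hl.comp_hasDerivAt 1 hline
  have hmem : {t : ℝ | 0 < t ∧ t • β ∈ u} ∈ nhds (1 : ℝ) := by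
    have h1 : (fun t : ℝ => t • β) ⁻¹' u ∈ nhds (1 : ℝ) := by
      refine (Continuous.continuousAt ?_).preimage_mem_nhds ?_
      · exact continuous_id.smul continuous_const
      · simpa using hu.mem_nhds hβ
    have h2 : Set.Ioi (0 : ℝ) ∈ nhds (1 : ℝ) := Ioi_mem_nhds one_pos
    filter_upwards [h1, h2] with t ht1 ht2
    exact ⟨ht2, ht1⟩
  have hconst : (fun t : ℝ => fderiv ℝ F (t • β) y) =ᶠ[nhds 1]
      fun _ => fderiv ℝ F β y := by
    filter_upwards [hmem] with t ht
    obtain ⟨ht0, htu⟩ := ht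
    have hm : HasFDerivAt (fun c : E => t • c) (t • ContinuousLinearMap.id ℝ E) β := by
      have := (t • ContinuousLinearMap.id ℝ E).hasFDerivAt (x := β)
      exact this
    have e1 : HasFDerivAt (F ∘ fun c : E => t • c)
        ((fderiv ℝ F (t • β)).comp (t • ContinuousLinearMap.id ℝ E)) β :=
      ((hd _ htu).hasFDerivAt).comp β hm
    have e3 : (F ∘ fun c : E => t • c) = fun c => t * F c :=
      funext fun c => hom t ht0 c
    rw [e3] at e1
    have e2 : HasFDerivAt (fun c => t * F c) (t • fderiv ℝ F β) β :=
      ((hd β hβ).hasFDerivAt).const_mul t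
    have hD := e1.unique e2
    have happ := congrArg (fun T : E →L[ℝ] ℝ => T y) hD
    simp only [ContinuousLinearMap.coe_comp', Function.comp_apply,
      ContinuousLinearMap.smul_apply, ContinuousLinearMap.coe_smul',
      Pi.smul_apply, ContinuousLinearMap.coe_id', id_eq, _root_.map_smul,
      smul_eq_mul] at happ
    exact mul_left_cancel₀ (ne_of_gt ht0) happ
  have h0 : HasDerivAt (fun t : ℝ => fderiv ℝ F (t • β) y) 0 1 :=
    (hasDerivAt_const (1 : ℝ) (fderiv ℝ F β y)).congr_of_eventuallyEq hconst
  exact hcomp.unique h0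

/-- A limit first-price pacing equilibrium for budgets `b`, valuations `v`, and supply
measure `μ` (i.e. `μ = s(θ)dθ`): pacing multipliers `β ∈ (0,1]^n`, prices `p`, and
allocations `x` satisfying first-price, feasibility, and market-clearing conditions. -/
def IsFPPE {Θ : Type*} [MeasurableSpace Θ] {n : ℕ} (μ : MeasureTheory.Measure Θ)
    (b : Fin n → ℝ) (v : Fin n → Θ → ℝ) (β : Fin n → ℝ) (p : Θ → ℝ)
    (x : Fin n → Θ → ℝ) : Prop :=
  (∀ i, 0 < β i ∧ β i ≤ 1) ∧
  (∀ θ, p θ = ⨆ i, β i * v i θ) ∧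
  (∀ i θ, 0 < x i θ → β i * v i θ = p θ) ∧
  (∀ i θ, 0 ≤ x i θ ∧ x i θ ≤ 1) ∧
  (∀ i, ∫ θ, x i θ * p θ ∂μ ≤ b i) ∧
  (∀ θ, ∑ i, x i θ ≤ 1) ∧
  (∀ i, (∫ θ, x i θ * p θ ∂μ) < b i → β i = 1) ∧
  (∀ θ, 0 < p θ → ∑ i, x i θ = 1)


/-- In a limit FPPE with dual objective
`H(β) = E[max_i β_i v_i(θ)] − Σ b_i log β_i` twice continuously differentiable at `β*`
with Hessian matrix `𝓗`, if `β*_i < 1` for all `i` then a.e. `p*(θ) = μ̄*ᵀ 𝓗⁻¹ μ*(θ)`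
where `μ*(θ) = x*(θ) ⊙ v(θ)` and `μ̄* = E[μ*(θ)]`. -/
theorem stmt8 {Θ : Type*} [MeasurableSpace Θ] {n : ℕ} [NeZero n] (μ : Measure Θ)
    [IsProbabilityMeasure μ]
    (b : Fin n → ℝ) (v : Fin n → Θ → ℝ) (β : Fin n → ℝ) (p : Θ → ℝ)
    (x : Fin n → Θ → ℝ)
    (hb : ∀ i, 0 < b i) (hv : ∀ i θ, 0 ≤ v i θ)
    (hfppe : IsFPPE μ b v β p x)
    (𝓗 : Matrix (Fin n) (Fin n) ℝ)
    (hsmooth : ContDiffAt ℝ 2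
      (fun β' : Fin n → ℝ =>
        (∫ θ, (⨆ i, β' i * v i θ) ∂μ) - ∑ i, b i * Real.log (β' i)) β)
    (hHess : ∀ y z : Fin n → ℝ,
      fderiv ℝ (fderiv ℝ (fun β' : Fin n → ℝ =>
        (∫ θ, (⨆ i, β' i * v i θ) ∂μ) - ∑ i, b i * Real.log (β' i))) β y z
        = y ⬝ᵥ 𝓗.mulVec z)
    (hHinv : IsUnit 𝓗.det)
    (hβlt : ∀ i, β i < 1) :
    ∀ᵐ θ ∂μ,
      p θ = (fun i => ∫ θ', x i θ' * v i θ' ∂μ) ⬝ᵥ 𝓗⁻¹.mulVec (fun i => x i θ * v i θ) := by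
  classical
  obtain ⟨h1, h2, h3, h4, h5, h6, h7, h8⟩ := hfppe
  have hβpos : ∀ i, 0 < β i := fun i => (h1 i).1
  have hβne : ∀ i, β i ≠ 0 := fun i => (hβpos i).ne'
  have hne : Nonempty (Fin n) := ⟨⟨0, Nat.pos_of_ne_zero (NeZero.ne n)⟩⟩
  set F : (Fin n → ℝ) → ℝ := fun c => ∫ θ, (⨆ i, c i * v i θ) ∂μ with hFdef
  set L : (Fin n → ℝ) → ℝ := fun c => ∑ i, b i * Real.log (c i) with hLdef
  have hsmooth' : ContDiffAt ℝ 2 (fun c => F c - L c) β := by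
    simp only [hFdef, hLdef]; exact hsmooth
  have hHess' : ∀ y z : Fin n → ℝ,
      fderiv ℝ (fderiv ℝ (fun c => F c - L c)) β y z = y ⬝ᵥ 𝓗.mulVec z := by
    simp only [hFdef, hLdef]; exact hHess
  -- homogeneity of F
  have hom : ∀ t : ℝ, 0 < t → ∀ c : Fin n → ℝ, F (t • c) = t * F c := by
    intro t ht c
    simp only [hFdef]
    have hpt : ∀ θ, (⨆ i, (t • c) i * v i θ) = t * ⨆ i, c i * v i θ := by
      intro θ
      rw [Real.mul_iSup_of_nonneg ht.le]
      exact iSup_congr fun i => by simp [mul_assoc]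
    simp_rw [hpt]
    exact integral_const_mul t _
  -- the good open neighborhood
  have hposopen : IsOpen {c : Fin n → ℝ | ∀ i, 0 < c i} := by
    have he : {c : Fin n → ℝ | ∀ i, 0 < c i}
        = ⋂ i, (fun c : Fin n → ℝ => c i) ⁻¹' Set.Ioi 0 := by
      ext c; simp
    rw [he]
    exact isOpen_iInter_of_finite fun i =>
      (continuous_apply i).isOpen_preimage _ isOpen_Ioi
  obtain ⟨u0, hu0, hu0C⟩ := hsmooth'.contDiffOn le_rfl (by simp)
  set U : Set (Fin n → ℝ) := interior u0 ∩ {c | ∀ i, 0 < c i} with hUdef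
  have hUopen : IsOpen U := isOpen_interior.inter hposopen
  have hβU : β ∈ U := ⟨mem_interior_iff_mem_nhds.2 hu0, hβpos⟩
  have hUpos : ∀ c ∈ U, ∀ i, (c : Fin n → ℝ) i ≠ 0 := fun c hc i => (hc.2 i).ne'
  have hHfU : ContDiffOn ℝ 2 (fun c => F c - L c) U :=
    hu0C.mono (Set.inter_subset_left.trans interior_subset)
  have hLC : ∀ c : Fin n → ℝ, (∀ i, c i ≠ 0) → ContDiffAt ℝ 2 L c := by
    intro c hc
    simp only [hLdef]
    apply ContDiffAt.sum
    intro i _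
    have hproj : ContDiffAt ℝ 2 (fun c : Fin n → ℝ => c i) c :=
      (ContinuousLinearMap.proj (R := ℝ) (φ := fun _ : Fin n => ℝ) i).contDiff.contDiffAt
    exact contDiffAt_const.mul (ContDiffAt.comp (g := Real.log) c (Real.contDiffAt_log.2 (hc i)) hproj)
  have hLU : ContDiffOn ℝ 2 L U := fun c hc => (hLC c (hUpos c hc)).contDiffWithinAt
  have hFU : ContDiffOn ℝ 2 F U := by
    have he : F = fun c => (F c - L c) + L c := by funext c; ring
    rw [he]
    exact hHfU.add hLU
  have hHfd : ∀ c ∈ U, DifferentiableAt ℝ (fun c' => F c' - L c') c := fun c hc =>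
    (hHfU.differentiableOn two_ne_zero).differentiableAt (hUopen.mem_nhds hc)
  have hFd : ∀ c ∈ U, DifferentiableAt ℝ F c := fun c hc =>
    (hFU.differentiableOn two_ne_zero).differentiableAt (hUopen.mem_nhds hc)
  have hLd : ∀ c ∈ U, DifferentiableAt ℝ L c := fun c hc =>
    (hLU.differentiableOn two_ne_zero).differentiableAt (hUopen.mem_nhds hc)
  have hF2d : DifferentiableAt ℝ (fderiv ℝ F) β :=
    (((hFU.fderiv_of_isOpen hUopen (by norm_num)).differentiableOn
      one_ne_zero)).differentiableAt (hUopen.mem_nhds hβU)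
  have hHf2d : DifferentiableAt ℝ (fderiv ℝ (fun c => F c - L c)) β :=
    (((hHfU.fderiv_of_isOpen hUopen (by norm_num)).differentiableOn
      one_ne_zero)).differentiableAt (hUopen.mem_nhds hβU)
  -- derivative of L
  have hLhas : ∀ c : Fin n → ℝ, (∀ i, c i ≠ 0) →
      HasFDerivAt L (∑ i, (b i * (c i)⁻¹) •
        (ContinuousLinearMap.proj (R := ℝ) (φ := fun _ : Fin n => ℝ) i)) c := by
    intro c hc
    have hterm : ∀ i ∈ Finset.univ, HasFDerivAt
        (fun c : Fin n → ℝ => b i * Real.log (c i))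
        ((b i * (c i)⁻¹) •
          (ContinuousLinearMap.proj (R := ℝ) (φ := fun _ : Fin n => ℝ) i)) c := by
      intro i _
      have hproj : HasFDerivAt (fun c : Fin n → ℝ => c i)
          (ContinuousLinearMap.proj (R := ℝ) (φ := fun _ : Fin n => ℝ) i) c :=
        (ContinuousLinearMap.proj (R := ℝ) (φ := fun _ : Fin n => ℝ) i).hasFDerivAt
      have hlog := (Real.hasDerivAt_log (hc i)).comp_hasFDerivAt c hproj
      have := hlog.const_mul (b i)
      simpa [smul_smul] using this
    have := HasFDerivAt.fun_sum hterm
    simpa [hLdef] using this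
  -- key identity
  have key : ∀ y : Fin n → ℝ, β ⬝ᵥ 𝓗.mulVec y = ∑ i, b i * (β i)⁻¹ * y i := by
    intro y
    rw [← hHess' β y]
    have hswap : fderiv ℝ (fun c => fderiv ℝ (fun c' => F c' - L c') c y) β β
        = fderiv ℝ (fderiv ℝ (fun c' => F c' - L c')) β β y := by
      rw [fderiv_clm_apply hHf2d (differentiableAt_const y)]
      simp
    rw [← hswap]
    have hψ : HasFDerivAt (fun c : Fin n → ℝ => ∑ i, b i * (c i)⁻¹ * y i)
        (∑ i, (b i * (-((β i) ^ 2)⁻¹) * y i) •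
          (ContinuousLinearMap.proj (R := ℝ) (φ := fun _ : Fin n => ℝ) i)) β := by
      have hterm : ∀ i ∈ Finset.univ, HasFDerivAt
          (fun c : Fin n → ℝ => b i * (c i)⁻¹ * y i)
          ((b i * (-((β i) ^ 2)⁻¹) * y i) •
            (ContinuousLinearMap.proj (R := ℝ) (φ := fun _ : Fin n => ℝ) i)) β := by
        intro i _
        have hproj : HasFDerivAt (fun c : Fin n → ℝ => c i)
            (ContinuousLinearMap.proj (R := ℝ) (φ := fun _ : Fin n => ℝ) i) β :=
          (ContinuousLinearMap.proj (R := ℝ) (φ := fun _ : Fin n => ℝ) i).hasFDerivAt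
        have hinv := (hasDerivAt_inv (hβne i)).comp_hasFDerivAt β hproj
        have h' := (hinv.const_mul (b i)).mul_const (y i)
        have hD : (b i * (-((β i) ^ 2)⁻¹) * y i) •
              (ContinuousLinearMap.proj (R := ℝ) (φ := fun _ : Fin n => ℝ) i)
            = y i • (b i • ((-((β i) ^ 2)⁻¹) •
              (ContinuousLinearMap.proj (R := ℝ) (φ := fun _ : Fin n => ℝ) i))) := by
          rw [smul_smul, smul_smul]
          congr 1
          ring
        rw [hD]
        exact h'
      exact HasFDerivAt.fun_sum hterm
    have heq : (fun c => fderiv ℝ (fun c' => F c' - L c') c y)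
        =ᶠ[nhds β] fun c => fderiv ℝ F c y - ∑ i, b i * (c i)⁻¹ * y i := by
      filter_upwards [hUopen.mem_nhds hβU] with c hc
      rw [fderiv_fun_sub (hFd c hc) (hLd c hc)]
      simp only [ContinuousLinearMap.sub_apply]
      congr 1
      rw [(hLhas c (hUpos c hc)).fderiv]
      simp [mul_assoc]
    rw [heq.fderiv_eq]
    rw [fderiv_fun_sub (hF2d.clm_apply (differentiableAt_const y)) hψ.differentiableAt]
    simp only [ContinuousLinearMap.sub_apply]
    rw [aux_rayconst hUopen hβU hFd hF2d hom y, hψ.fderiv]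
    simp only [ContinuousLinearMap.sum_apply, ContinuousLinearMap.smul_apply,
      ContinuousLinearMap.proj_apply, smul_eq_mul]
    rw [zero_sub, ← Finset.sum_neg_distrib]
    refine Finset.sum_congr rfl fun i _ => ?_
    field_simp
  -- budgets are fully spent
  have hspend : ∀ i, ∫ θ, x i θ * p θ ∂μ = b i := by
    intro i
    rcases lt_or_eq_of_le (h5 i) with h | h
    · exact absurd (h7 i h) (ne_of_lt (hβlt i))
    · exact h
  have hμbar : ∀ j, (∫ θ', x j θ' * v j θ' ∂μ) = b j * (β j)⁻¹ := by
    intro j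
    have hx : ∀ θ, x j θ * p θ = β j * (x j θ * v j θ) := by
      intro θ
      rcases (h4 j θ).1.lt_or_eq with h | h
      · rw [← h3 j θ h]; ring
      · rw [← h]; ring
    have hint : ∫ θ, x j θ * p θ ∂μ = β j * ∫ θ', x j θ' * v j θ' ∂μ := by
      simp_rw [hx]; exact integral_const_mul _ _
    have hb' := hspend j
    rw [hint] at hb'
    rw [eq_mul_inv_iff_mul_eq₀ (hβne j), mul_comm]
    exact hb'
  -- pointwise price identity
  have hpβ : ∀ θ, p θ = ∑ i, β i * (x i θ * v i θ) := by
    intro θ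
    have hbdd : BddAbove (Set.range fun i => β i * v i θ) := (Set.finite_range _).bddAbove
    have hle : ∀ i, β i * v i θ ≤ p θ := by
      intro i; rw [h2 θ]; exact le_ciSup hbdd i
    obtain ⟨i₀⟩ := hne
    have hp0 : 0 ≤ p θ := le_trans (mul_nonneg (hβpos i₀).le (hv i₀ θ)) (hle i₀)
    have hterm : ∀ i, β i * (x i θ * v i θ) = x i θ * p θ := by
      intro i
      rcases (h4 i θ).1.lt_or_eq with h | h
      · rw [← h3 i θ h]; ring
      · rw [← h]; ring
    rw [Finset.sum_congr rfl fun i _ => hterm i, ← Finset.sum_mul]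
    rcases hp0.lt_or_eq with h | h
    · rw [h8 θ h, one_mul]
    · rw [← h, mul_zero]
  -- identify μ̄ with β ᵥ* 𝓗
  have hvec : (fun j => ∫ θ', x j θ' * v j θ' ∂μ) = β ᵥ* 𝓗 := by
    funext j
    have hk := key (Pi.single j 1)
    have hL1 : β ⬝ᵥ 𝓗.mulVec (Pi.single j 1) = (β ᵥ* 𝓗) j := by
      simp [Matrix.vecMul, dotProduct]
    have hR1 : (∑ i, b i * (β i)⁻¹ * (Pi.single j 1 : Fin n → ℝ) i) = b j * (β j)⁻¹ := by
      rw [Finset.sum_eq_single j]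
      · simp
      · intro i _ hij; simp [Pi.single_apply, hij]
      · intro hj; exact absurd (Finset.mem_univ j) hj
    rw [hμbar j, ← hR1, ← hk, hL1]
  refine Filter.Eventually.of_forall fun θ => ?_
  rw [hvec, Matrix.dotProduct_mulVec, Matrix.vecMul_vecMul,
    Matrix.mul_nonsing_inv _ hHinv, Matrix.vecMul_one]
  simpa [dotProduct] using hpβ θ
end

section
/- In any limit FPPE, each buyer's allocation maximizes their quasilinear utility among budget-feasible allocations: for all i, x*_i ∈ argmax { ⟨v_i, s x⟩ + (b_i − ⟨p*, s x⟩) : x ∈ L^∞, 0 ≤ x ≤ 1, ⟨p*, s x⟩ ≤ b_i }. -/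
open MeasureTheory

/-- In any limit FPPE, each buyer's allocation maximizes their quasilinear
utility `⟨v_i, s x⟩ + (b_i − ⟨p*, s x⟩)` among budget-feasible allocations `0 ≤ x ≤ 1`
with `⟨p*, s x⟩ ≤ b_i`. -/
theorem stmt14 {Θ : Type*} [MeasurableSpace Θ] {n : ℕ} (μ : Measure Θ)
    [IsProbabilityMeasure μ]
    (b : Fin n → ℝ) (v : Fin n → Θ → ℝ) (β : Fin n → ℝ) (p : Θ → ℝ)
    (x : Fin n → Θ → ℝ)
    (hb : ∀ i, 0 < b i) (hv : ∀ i θ, 0 ≤ v i θ)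
    (hintv : ∀ i, Integrable (fun θ => v i θ * x i θ) μ)
    (hintp : ∀ i, Integrable (fun θ => p θ * x i θ) μ)
    (hfppe : IsFPPE μ b v β p x) :
    ∀ i, ∀ x' : Θ → ℝ, (∀ θ, 0 ≤ x' θ ∧ x' θ ≤ 1) →
      Integrable (fun θ => v i θ * x' θ) μ → Integrable (fun θ => p θ * x' θ) μ →
      (∫ θ, p θ * x' θ ∂μ) ≤ b i →
      (∫ θ, v i θ * x' θ ∂μ) + (b i - ∫ θ, p θ * x' θ ∂μ) ≤
        (∫ θ, v i θ * x i θ ∂μ) + (b i - ∫ θ, p θ * x i θ ∂μ) := by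
  intro i x' hx' hiv' hip' hbud'
  obtain ⟨hβ, hpdef, hfp, hxb, hbudget, _, htight, _⟩ := hfppe
  obtain ⟨hβ0, hβ1⟩ := hβ i
  -- pointwise: β i * v i θ ≤ p θ
  have hA : ∀ θ, β i * v i θ ≤ p θ := by
    intro θ
    rw [hpdef θ]
    exact le_ciSup (f := fun j => β j * v j θ) (Set.Finite.bddAbove (Set.finite_range _)) i
  -- pointwise equality for x i
  have hB : ∀ θ, v i θ * x i θ = (β i)⁻¹ * (p θ * x i θ) := by
    intro θ
    rcases eq_or_lt_of_le (hxb i θ).1 with h | h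
    · rw [← h]; ring
    · have := hfp i θ h
      field_simp
      nlinarith [this]
  -- pointwise inequality for x'
  have hC : ∀ θ, v i θ * x' θ ≤ (β i)⁻¹ * (p θ * x' θ) := by
    intro θ
    have h1 : v i θ ≤ (β i)⁻¹ * p θ := by
      rw [inv_mul_eq_div, le_div_iff₀ hβ0]
      linarith [hA θ]
    calc v i θ * x' θ ≤ ((β i)⁻¹ * p θ) * x' θ :=
          mul_le_mul_of_nonneg_right h1 (hx' θ).1
      _ = (β i)⁻¹ * (p θ * x' θ) := by ring
  -- integral versions
  have hIvB : ∫ θ, v i θ * x i θ ∂μ = (β i)⁻¹ * ∫ θ, p θ * x i θ ∂μ := by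
    rw [← integral_const_mul]
    exact integral_congr_ae (Filter.Eventually.of_forall hB)
  have hIvC : ∫ θ, v i θ * x' θ ∂μ ≤ (β i)⁻¹ * ∫ θ, p θ * x' θ ∂μ := by
    rw [← integral_const_mul]
    exact integral_mono hiv' (hip'.const_mul _) hC
  have hIpi : ∫ θ, x i θ * p θ ∂μ = ∫ θ, p θ * x i θ ∂μ := by
    simp [mul_comm]
  -- dichotomy
  set Ip' := ∫ θ, p θ * x' θ ∂μ
  set Ipi := ∫ θ, p θ * x i θ ∂μ
  rcases eq_or_lt_of_le (hβ1) with hβeq | hβlt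
  · -- β i = 1
    rw [hIvB, hβeq]
    simp only [inv_one, one_mul]
    have : ∫ θ, v i θ * x' θ ∂μ ≤ Ip' := by
      have := hIvC; rw [hβeq] at this; simpa using this
    linarith
  · -- β i < 1, budget tight
    have htight' : Ipi = b i := by
      by_contra h
      have hlt : Ipi < b i := lt_of_le_of_ne (hIpi ▸ hbudget i) h
      have := htight i (by rw [hIpi]; exact hlt)
      linarith
    rw [hIvB, htight']
    have hinv : (1:ℝ) ≤ (β i)⁻¹ := one_le_inv_iff₀.mpr ⟨hβ0, hβ1⟩
    nlinarith [hIvC, hbud']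
end
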